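/- Let n ≥ 2, ω = exp(2πi/n), let Aₙ ∈ Mₙ(ℂ) be the diagonal matrix with (Aₙ)_{jj} = ω^j for j = 0,…,n−1, let Fₙ be the Fourier matrix with entries (Fₙ)_{jk} = ω^{jk}, and set B = (1/n)·Fₙᴴ Aₙ Fₙ. Then for all (x,y,z) ∈ ℂ³ one has det(x·Aₙ + y·B + z·AₙB − I) = 0 if and only if xⁿ + yⁿ + (−1)^{n−1} zⁿ = 1. -/

import Mathlib

open Matrix Complex

noncomputable section

open Finset

lemma det_cyclic_bidiag {m : ℕ} (hm : 1 ≤ m) (d c : Fin (m+1) → ℂ) :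
    (Matrix.of (fun j k : Fin (m+1) =>
      if j = k then d j else if j = k + 1 then c j else 0)).det
      = ∏ j, d j + (-1 : ℂ)^m * ∏ j, c j := by
  set M : Matrix (Fin (m+1)) (Fin (m+1)) ℂ :=
    Matrix.of (fun j k => if j = k then d j else if j = k + 1 then c j else 0) with hM
  have hlast0 : (0 : Fin (m+1)) ≠ Fin.last m := by
    simp [Fin.ext_iff, Fin.last]; omega
  -- minor 1 : remove row 0, column 0
  have hminor1 : (M.submatrix Fin.succ ((0 : Fin (m+1)).succAbove)).det
      = ∏ i : Fin m, d i.succ := by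
    have htri : (M.submatrix Fin.succ ((0 : Fin (m+1)).succAbove)).BlockTriangular OrderDual.toDual := by
      intro i j hij
      have hij' : (i : Fin m) < j := hij
      simp only [submatrix_apply, Fin.succAbove_zero, hM, Matrix.of_apply]
      rw [if_neg, if_neg]
      · intro h
        rcases lt_or_eq_of_le (Fin.le_last j.succ) with hlt | heq
        · have hv := congrArg Fin.val h
          rw [Fin.val_add_one_of_lt hlt] at hv
          simp [Fin.val_succ] at hv
          omega
        · rw [heq, Fin.last_add_one] at h
          exact Fin.succ_ne_zero i h
      · intro h
        have := Fin.succ_injective _ h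
        subst this
        exact lt_irrefl _ hij'
    rw [Matrix.det_of_lowerTriangular _ htri]
    refine Finset.prod_congr rfl fun i _ => ?_
    simp [hM]
  -- minor 2 : remove row 0, column last
  have hminor2 : (M.submatrix Fin.succ ((Fin.last m).succAbove)).det
      = ∏ i : Fin m, c i.succ := by
    have hcast : ∀ j : Fin m, (j.castSucc + 1 : Fin (m+1)).val = (j : ℕ) + 1 := by
      intro j
      rw [Fin.val_add_one_of_lt]
      · simp
      · exact Fin.castSucc_lt_last j
    have htri : (M.submatrix Fin.succ ((Fin.last m).succAbove)).BlockTriangular id := by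
      intro i j hij
      have hij' : (j : Fin m) < i := hij
      simp only [submatrix_apply, Fin.succAbove_last, hM, Matrix.of_apply]
      rw [if_neg, if_neg]
      · intro h
        have hv := congrArg Fin.val h
        rw [hcast j] at hv
        simp [Fin.val_succ] at hv
        omega
      · intro h
        have hv := congrArg Fin.val h
        simp [Fin.val_succ, Fin.coe_castSucc] at hv
        omega
    rw [Matrix.det_of_upperTriangular htri]
    refine Finset.prod_congr rfl fun i _ => ?_
    have : M i.succ i.castSucc = c i.succ := by
      rw [hM]
      simp only [Matrix.of_apply]
      rw [if_neg, if_pos]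
      · exact Fin.ext (by rw [hcast i]; simp)
      · intro h
        have hv := congrArg Fin.val h
        simp [Fin.val_succ, Fin.coe_castSucc] at hv
    simpa using this
  rw [Matrix.det_succ_row_zero]
  rw [← Finset.sum_subset (Finset.subset_univ ({0, Fin.last m} : Finset (Fin (m+1))))]
  · rw [Finset.sum_pair hlast0]
    have h00 : M 0 0 = d 0 := by simp [hM]
    have h0l : M 0 (Fin.last m) = c 0 := by
      rw [hM]
      simp only [Matrix.of_apply]
      rw [if_neg hlast0, if_pos]
      rw [Fin.last_add_one]
    rw [h00, h0l, hminor1, hminor2]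
    simp only [Fin.val_zero, pow_zero, one_mul, Fin.val_last]
    rw [Fin.prod_univ_succ d, Fin.prod_univ_succ c]
    ring
  · intro j _ hj
    simp only [Finset.mem_insert, Finset.mem_singleton, not_or] at hj
    have : M 0 j = 0 := by
      rw [hM]
      simp only [Matrix.of_apply]
      rw [if_neg (Ne.symm hj.1), if_neg]
      intro h
      apply hj.2
      have : j + 1 = 0 := h.symm
      have := eq_neg_of_add_eq_zero_left this
      rw [this]
      exact neg_eq_of_add_eq_zero_left (Fin.last_add_one m)
    rw [this]
    ring

theorem stmt_0 (n : ℕ) (hn : 2 ≤ n)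
    (ω : ℂ) (hω : ω = Complex.exp (2 * Real.pi * Complex.I / n))
    (A F B : Matrix (Fin n) (Fin n) ℂ)
    (hA : A = Matrix.diagonal (fun j : Fin n => ω ^ (j : ℕ)))
    (hF : F = Matrix.of (fun j k : Fin n => ω ^ ((j : ℕ) * (k : ℕ))))
    (hB : B = ((1 : ℂ) / n) • (Fᴴ * A * F)) :
    ∀ x y z : ℂ,
      (x • A + y • B + z • (A * B) - 1).det = 0 ↔
        x ^ n + y ^ n + (-1 : ℂ) ^ (n - 1) * z ^ n = 1 := by
  intro x y z
  obtain ⟨m, rfl⟩ : ∃ m, n = m + 1 := ⟨n - 1, by omega⟩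
  have hm : 1 ≤ m := by omega
  have hn0 : (m + 1) ≠ 0 := by omega
  have hnpos : 0 < (m + 1) := by omega
  have hprim : IsPrimitiveRoot ω (m + 1) := by
    rw [hω]; exact Complex.isPrimitiveRoot_exp (m + 1) hn0
  have hωn : ω ^ (m + 1) = 1 := hprim.pow_eq_one
  have hω0 : ω ≠ 0 := by
    intro h; rw [h, zero_pow hn0] at hωn; exact zero_ne_one hωn
  have hpow_mod : ∀ a : ℕ, ω ^ (a % (m + 1)) = ω ^ a := by
    intro a
    conv_rhs => rw [← Nat.mod_add_div a (m + 1)]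
    rw [pow_add, pow_mul, hωn, one_pow, mul_one]
  have hconj : (starRingEnd ℂ) ω = ω⁻¹ := by
    rw [hω, ← Complex.exp_conj, ← Complex.exp_neg]
    congr 1
    simp [map_div₀, Complex.conj_I, map_ofNat]
    ring
  -- value of (1 : Fin (m + 1))
  have hone : ((1 : Fin (m + 1)) : ℕ) = 1 := by
    simp [Fin.val_one', Nat.mod_eq_of_lt (by omega : 1 < (m + 1))]
  have hvadd : ∀ k : Fin (m + 1), ((k + 1 : Fin (m + 1)) : ℕ) = ((k : ℕ) + 1) % (m + 1) := by
    intro k; rw [Fin.val_add, hone]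
  -- B is the cyclic shift matrix
  have hBent : ∀ j k : Fin (m + 1), B j k = if j = k + 1 then (1 : ℂ) else 0 := by
    intro j k
    have hent : (Fᴴ * A * F) j k
        = ∑ l : Fin (m + 1), (ω ^ ((k : ℕ) + 1) * (ω ^ (j : ℕ))⁻¹) ^ (l : ℕ) := by
      rw [hA, hF, Matrix.mul_apply]
      refine Finset.sum_congr rfl fun l _ => ?_
      rw [Matrix.mul_diagonal, Matrix.conjTranspose_apply]
      simp only [Matrix.of_apply, star_pow]
      have h1 : (star ω) ^ ((l : ℕ) * (j : ℕ)) = ((ω ^ (j : ℕ))⁻¹) ^ (l : ℕ) := by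
        rw [RCLike.star_def, hconj, ← inv_pow, ← pow_mul, mul_comm (l : ℕ), pow_mul]
      have h2 : ω ^ (l : ℕ) * ω ^ ((l : ℕ) * (k : ℕ)) = (ω ^ ((k : ℕ) + 1)) ^ (l : ℕ) := by
        rw [← pow_add, ← pow_mul]
        congr 1
        ring
      rw [mul_assoc, h1, h2, mul_pow]
      ring
    set ζ := ω ^ ((k : ℕ) + 1) * (ω ^ (j : ℕ))⁻¹ with hζdef
    have hζn : ζ ^ (m + 1) = 1 := by
      rw [hζdef, mul_pow, ← pow_mul, mul_comm ((k : ℕ) + 1), pow_mul, hωn, one_pow,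
        inv_pow, ← pow_mul, mul_comm (j : ℕ), pow_mul, hωn, one_pow, inv_one, one_mul]
    have hζiff : ζ = 1 ↔ j = k + 1 := by
      rw [hζdef, mul_inv_eq_one₀ (pow_ne_zero _ hω0)]
      constructor
      · intro h
        have h' : ω ^ (((k + 1 : Fin (m + 1)) : ℕ)) = ω ^ ((j : ℕ)) := by
          rw [hvadd, hpow_mod, h]
        exact (Fin.ext (hprim.pow_inj (k + 1).isLt j.isLt h')).symm
      · intro h
        subst h
        rw [← hpow_mod ((k : ℕ) + 1), ← hvadd]
    rw [hB, Matrix.smul_apply, hent, smul_eq_mul]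
    rw [Fin.sum_univ_eq_sum_range (fun i => ζ ^ i) (m + 1)]
    by_cases hζ1 : ζ = 1
    · rw [if_pos (hζiff.mp hζ1), hζ1]
      simp only [one_pow, Finset.sum_const, Finset.card_range, nsmul_eq_mul, mul_one]
      rw [div_mul_cancel₀]
      · exact Nat.cast_ne_zero.mpr hn0
    · rw [if_neg (fun h => hζ1 (hζiff.mpr h)), geom_sum_eq hζ1, hζn, sub_self, zero_div,
        mul_zero]
  -- the matrix is cyclic bidiagonal
  have honeF : (1 : Fin (m + 1)) ≠ 0 := by
    intro h; have := congrArg Fin.val h; rw [hone] at this; simp at this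
  have hself : ∀ k : Fin (m + 1), k + 1 ≠ k := by
    intro k h
    exact honeF (by
      have := congrArg (fun t => t - k) h
      simpa [add_comm, add_sub_cancel_right, sub_self] using this)
  have hMeq : x • A + y • B + z • (A * B) - 1
      = Matrix.of (fun j k : Fin (m + 1) =>
          if j = k then x * ω ^ (j : ℕ) - 1
          else if j = k + 1 then y + z * ω ^ (j : ℕ) else 0) := by
    ext j k
    have hABent : (A * B) j k = if j = k + 1 then ω ^ (j : ℕ) else 0 := by
      rw [hA, Matrix.diagonal_mul, hBent]
      split <;> simp
    simp only [Matrix.sub_apply, Matrix.add_apply, Matrix.smul_apply, Matrix.one_apply,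
      Matrix.of_apply, smul_eq_mul]
    rw [hABent, hBent j k, hA]
    simp only [Matrix.diagonal_apply]
    split_ifs with h1 h2
    · exact absurd (h2.symm.trans h1) (hself k)
    · ring
    · ring
    · ring
  rw [hMeq, det_cyclic_bidiag hm]
  -- product over roots of unity
  have hprodroots : ∀ u v : ℂ, ∏ j : Fin (m + 1), (u - ω ^ (j : ℕ) * v) = u ^ (m + 1) - v ^ (m + 1) := by
    intro u v
    rw [IsPrimitiveRoot.pow_sub_pow_eq_prod_sub_mul u v hnpos hprim]
    refine Finset.prod_bij (fun (j : Fin (m + 1)) _ => ω ^ (j : ℕ)) ?_ ?_ ?_ ?_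
    · intro j _
      rw [Polynomial.mem_nthRootsFinset hnpos, ← pow_mul, mul_comm, pow_mul, hωn, one_pow]
    · intro a _ b _ h
      exact Fin.ext (hprim.pow_inj a.isLt b.isLt h)
    · intro ζ hζ
      obtain ⟨i, hi, rfl⟩ :=
        hprim.eq_pow_of_pow_eq_one ((Polynomial.mem_nthRootsFinset hnpos (1 : ℂ)).mp hζ)
      exact ⟨⟨i, hi⟩, Finset.mem_univ _, rfl⟩
    · intro j _; rfl
  have P1 : ∏ j : Fin (m + 1), (x * ω ^ (j : ℕ) - 1) = (-1 : ℂ) ^ (m + 1) * (1 - x ^ (m + 1)) := by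
    have : ∀ j : Fin (m + 1), x * ω ^ (j : ℕ) - 1 = -(1 - ω ^ (j : ℕ) * x) := fun j => by ring
    rw [Finset.prod_congr rfl (fun j _ => this j)]
    have h2 : ∀ j : Fin (m + 1), -(1 - ω ^ (j : ℕ) * x) = (-1) * (1 - ω ^ (j : ℕ) * x) :=
      fun j => by ring
    rw [Finset.prod_congr rfl (fun j _ => h2 j), Finset.prod_mul_distrib, Finset.prod_const,
      Finset.card_univ, Fintype.card_fin, hprodroots 1 x, one_pow]
  have P2 : ∏ j : Fin (m + 1), (y + z * ω ^ (j : ℕ)) = y ^ (m + 1) - (-z) ^ (m + 1) := by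
    have : ∀ j : Fin (m + 1), y + z * ω ^ (j : ℕ) = y - ω ^ (j : ℕ) * (-z) := fun j => by ring
    rw [Finset.prod_congr rfl (fun j _ => this j), hprodroots y (-z)]
  rw [P1, P2]
  have hkey : (-1 : ℂ) ^ (m + 1) * (1 - x ^ (m + 1)) + (-1 : ℂ) ^ m * (y ^ (m + 1) - (-z) ^ (m + 1))
      = (-1 : ℂ) ^ m * (x ^ (m + 1) + y ^ (m + 1) + (-1 : ℂ) ^ m * z ^ (m + 1) - 1) := by
    rw [pow_succ, neg_pow z, pow_succ]
    ring
  rw [hkey, mul_eq_zero, sub_eq_zero]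
  simp [pow_ne_zero]
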